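/- For the equilibrium boundary parameter q_b = √q, the optimal angle φ_opt = -((√q - 1)²·q')/(2(√q·q' - 1)²) satisfies the saddle-point equation (1/2 + φ_opt)·f_U'(√q) + (1/2 - φ_opt)·f_V'(√q) = 0, where f_U(q_b) = (q_b² q' - q)/((q_b-q)(1-q_b q')) and f_V(q_b) = -(1-q')q_b/((1-q_b)(1-q_b q')). Moreover φ_opt ≤ 0, with equality iff q' = 0 or q = 1. -/

import Mathlib

/-- The optimal angle of the Bernoulli-Geometric polymer,
`φ_opt = -((√q - 1)² q')/(2(√q q' - 1)²)`, satisfies the saddle-point equation at the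
equilibrium boundary parameter `q_b = √q`:
`(1/2 + φ_opt)·f_U'(√q) + (1/2 - φ_opt)·f_V'(√q) = 0`, where
`f_U(q_b) = (q_b² q' - q)/((q_b-q)(1-q_b q'))` and `f_V(q_b) = -(1-q')q_b/((1-q_b)(1-q_b q'))`.
Moreover `φ_opt ≤ 0`, with equality iff `q' = 0` or `q = 1`. -/
theorem BG_optimal_angle (q q' : ℝ)
    (h0q : 0 < q) (hq1 : q < 1) (h0q' : 0 ≤ q') (hq'1 : q' < 1) :
    (1/2 + -((Real.sqrt q - 1) ^ 2 * q') / (2 * (Real.sqrt q * q' - 1) ^ 2)) *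
        deriv (fun x => (x ^ 2 * q' - q) / ((x - q) * (1 - x * q'))) (Real.sqrt q)
      + (1/2 - -((Real.sqrt q - 1) ^ 2 * q') / (2 * (Real.sqrt q * q' - 1) ^ 2)) *
        deriv (fun x => -((1 - q') * x) / ((1 - x) * (1 - x * q'))) (Real.sqrt q) = 0 ∧
    -((Real.sqrt q - 1) ^ 2 * q') / (2 * (Real.sqrt q * q' - 1) ^ 2) ≤ 0 ∧
    (-((Real.sqrt q - 1) ^ 2 * q') / (2 * (Real.sqrt q * q' - 1) ^ 2) = 0
      ↔ q' = 0 ∨ q = 1) := by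
  set s := Real.sqrt q with hs
  have hs0 : 0 < s := Real.sqrt_pos.mpr h0q
  have hs2 : s ^ 2 = q := Real.sq_sqrt h0q.le
  have hs1 : s < 1 := by
    nlinarith [Real.sq_sqrt h0q.le, Real.sqrt_nonneg q]
  have hsq' : s * q' < 1 := lt_of_le_of_lt (by nlinarith) hq'1
  have hd2 : (1 : ℝ) - s * q' ≠ 0 := by linarith
  have hd1 : s - q ≠ 0 := by nlinarith
  have hd3 : (1 : ℝ) - s ≠ 0 := by linarith
  have hnU := ((hasDerivAt_pow 2 s).mul_const q').sub_const q
  have hdenU := (((hasDerivAt_id s).sub_const q).mul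
      ((hasDerivAt_const s (1:ℝ)).sub ((hasDerivAt_id s).mul_const q')))
  have hdU := hnU.div hdenU (mul_ne_zero hd1 hd2)
  have hnV := ((hasDerivAt_id s).const_mul (1 - q')).neg
  have hdenV := (((hasDerivAt_const s (1:ℝ)).sub (hasDerivAt_id s)).mul
      ((hasDerivAt_const s (1:ℝ)).sub ((hasDerivAt_id s).mul_const q')))
  have hdV := hnV.div hdenV (mul_ne_zero hd3 hd2)
  have hq'1' : s * q' - 1 ≠ 0 := by linarith
  refine ⟨?_, ?_, ?_⟩
  · simp only [id_eq, Pi.div_def, Pi.mul_def, Pi.sub_def, Pi.neg_def] at hdU hdV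
    rw [hdU.deriv, hdV.deriv, ← hs2]
    norm_num
    have hA : s - s ^ 2 ≠ 0 := by nlinarith
    field_simp [hA, hd2, hd3, hq'1']
    ring
  · apply div_nonpos_of_nonpos_of_nonneg
    · nlinarith [sq_nonneg (s - 1)]
    · positivity
  · rw [div_eq_zero_iff]
    constructor
    · rintro (h | h)
      · have h2 : (s - 1) ^ 2 * q' = 0 := by linarith [neg_eq_zero.mp h]
        rcases mul_eq_zero.mp h2 with h3 | h3
        · right
          have : s = 1 := by nlinarith [sq_nonneg (s - 1)]
          nlinarith
        · left; exact h3
      · exact absurd h (by positivity)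
    · rintro (h | h)
      · left; simp [h]
      · left
        have : s = 1 := by rw [hs, h, Real.sqrt_one]
        simp [this]
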